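/- arXiv:2201.09771 — 2 statements merged into one kernel-verified Lean document; each statement's English description precedes it below -/
import Mathlib

section
/- Let g_r(z) := |z|^r for z ∈ ℝⁿ with r ≥ 2. Then there exists a constant c = c(r,n) > 0 such that for all z₁, z₂ ∈ ℝⁿ, c|V_r(z₁) - V_r(z₂)|² ≤ g_r(z₁) - g_r(z₂) - ⟨∇g_r(z₂), z₁ - z₂⟩, where V_r(z) = |z|^((r-2)/2) z. -/
open scoped RealInnerProductSpace
open Real

private lemma hmul_aux {r x : ℝ} (hr : 2 ≤ r) (hx : 0 ≤ x) :
    x ^ (r - 2) * x ^ 2 = x ^ r := by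
  rcases eq_or_lt_of_le hx with h | h
  · subst h
    rw [Real.zero_rpow (by linarith : r ≠ 0)]
    ring
  · rw [← Real.rpow_natCast x 2, ← Real.rpow_add h]
    norm_num

private lemma hsq_aux {r x : ℝ} (hx : 0 ≤ x) :
    (x ^ ((r - 2) / 2)) ^ 2 = x ^ (r - 2) := by
  rw [← Real.rpow_natCast (x ^ ((r - 2) / 2)) 2, ← Real.rpow_mul hx]
  norm_num

private lemma bern_aux {r a b : ℝ} (hr : 2 ≤ r) (ha : 0 ≤ a) (hb : 0 < b) :
    2 * b ^ r + r * (a * b ^ (r - 1)) - r * b ^ r ≤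
      2 * (a ^ (r / 2) * b ^ (r / 2)) := by
  have h1 : (-1 : ℝ) ≤ a / b - 1 := by
    have : 0 ≤ a / b := div_nonneg ha hb.le
    linarith
  have h2 : (1 : ℝ) ≤ r / 2 := by linarith
  have hB := one_add_mul_self_le_rpow_one_add h1 h2
  have he : (1 + (a / b - 1)) = a / b := by ring
  rw [he, Real.div_rpow ha hb.le] at hB
  have hbr : (0 : ℝ) < b ^ (r / 2) := Real.rpow_pos_of_pos hb _
  have hBr : (0 : ℝ) < b ^ r := Real.rpow_pos_of_pos hb _
  have h3 : (1 + r / 2 * (a / b - 1)) * (2 * b ^ r) ≤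
      a ^ (r / 2) / b ^ (r / 2) * (2 * b ^ r) :=
    mul_le_mul_of_nonneg_right hB (by positivity)
  have h4 : a ^ (r / 2) / b ^ (r / 2) * (2 * b ^ r) =
      2 * (a ^ (r / 2) * b ^ (r / 2)) := by
    have hbb : b ^ r = b ^ (r / 2) * b ^ (r / 2) := by
      rw [← Real.rpow_add hb]; congr 1; ring
    rw [hbb]
    field_simp
  have h5 : (1 + r / 2 * (a / b - 1)) * (2 * b ^ r) =
      2 * b ^ r + r * (a * (b ^ r / b)) - r * b ^ r := by
    field_simp
    ring
  have h6 : b ^ r / b = b ^ (r - 1) := by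
    rw [Real.rpow_sub hb, Real.rpow_one]
  rw [h4, h5, h6] at h3
  exact h3

set_option maxHeartbeats 2000000 in
private lemma scalar_key {r a b t : ℝ} (hr : 2 ≤ r) (ha : 0 ≤ a) (hb : 0 ≤ b)
    (ht : |t| ≤ a * b) :
    1 / 2 * (a ^ (r - 2) * a ^ 2 + b ^ (r - 2) * b ^ 2
        - 2 * (a ^ ((r - 2) / 2) * b ^ ((r - 2) / 2)) * t) ≤
      a ^ r - b ^ r - r * b ^ (r - 2) * (t - b ^ 2) := by
  obtain ⟨htl, htu⟩ := abs_le.mp ht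
  rcases eq_or_lt_of_le hb with hb0 | hbpos
  · -- b = 0
    subst hb0
    have ht0 : t = 0 := by nlinarith [abs_nonneg t, abs_le.mp ht]
    subst ht0
    have h1 := hmul_aux hr ha
    have h2 : (0:ℝ) ^ r = 0 := Real.zero_rpow (by linarith)
    have h3 : a ^ r ≥ 0 := Real.rpow_nonneg ha r
    nlinarith [h1, h2, h3]
  · rcases eq_or_lt_of_le ha with ha0 | hapos
    · -- a = 0
      subst ha0
      have ht0 : t = 0 := by nlinarith [abs_nonneg t, abs_le.mp ht]
      subst ht0
      have h2 : (0:ℝ) ^ r = 0 := Real.zero_rpow (by linarith)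
      have h3 : b ^ r ≥ 0 := Real.rpow_nonneg hb r
      have h4 : b ^ (r-2) * b ^ 2 = b ^ r := hmul_aux hr hb
      nlinarith [h2, h3, h4]
    · -- a, b > 0
      have hA2 : (a ^ (r / 2)) ^ 2 = a ^ r := by
        rw [← Real.rpow_natCast (a ^ (r/2)) 2, ← Real.rpow_mul hapos.le]
        norm_num
      have hB2 : (b ^ (r / 2)) ^ 2 = b ^ r := by
        rw [← Real.rpow_natCast (b ^ (r/2)) 2, ← Real.rpow_mul hbpos.le]
        norm_num
      have haa : a ^ (r - 2) * a ^ 2 = a ^ r := hmul_aux hr hapos.le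
      have hbb : b ^ (r - 2) * b ^ 2 = b ^ r := hmul_aux hr hbpos.le
      have ha1 : a ^ ((r - 2) / 2) * a ^ (1:ℝ) = a ^ (r / 2) := by
        rw [← Real.rpow_add hapos]; congr 1; ring
      rw [Real.rpow_one] at ha1
      have hb1 : b ^ ((r - 2) / 2) * b ^ (1:ℝ) = b ^ (r / 2) := by
        rw [← Real.rpow_add hbpos]; congr 1; ring
      rw [Real.rpow_one] at hb1
      have hcrossab : a ^ ((r - 2) / 2) * b ^ ((r - 2) / 2) * (a * b)
          = a ^ (r / 2) * b ^ (r / 2) := by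
        calc a ^ ((r - 2) / 2) * b ^ ((r - 2) / 2) * (a * b)
            = (a ^ ((r - 2) / 2) * a) * (b ^ ((r - 2) / 2) * b) := by ring
          _ = a ^ (r / 2) * b ^ (r / 2) := by rw [ha1, hb1]
      have hbm1 : b ^ (r - 2) * b ^ (1:ℝ) = b ^ (r - 1) := by
        rw [← Real.rpow_add hbpos]; congr 1; ring
      rw [Real.rpow_one] at hbm1
      have hb2ab : b ^ (r - 2) * (a * b) = a * b ^ (r - 1) := by
        calc b ^ (r - 2) * (a * b) = a * (b ^ (r - 2) * b) := by ring
          _ = a * b ^ (r - 1) := by rw [hbm1]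
      have hbern := bern_aux hr hapos.le hbpos
      have habr : 0 ≤ a * b ^ (r - 1) := by positivity
      have hB2r : r * (b ^ (r / 2)) ^ 2 = r * b ^ r := by rw [hB2]
      have hbbr : r * (b ^ (r - 2) * b ^ 2) = r * b ^ r := by rw [hbb]
      have hb2abr : r * (b ^ (r - 2) * (a * b)) = r * (a * b ^ (r - 1)) := by rw [hb2ab]
      have Eplus : 0 ≤ 1/2 * (a ^ (r / 2))^2 + (r - 3/2) * (b ^ (r / 2))^2
          + a ^ (r / 2) * b ^ (r / 2) - r * (a * b ^ (r - 1)) := by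
        nlinarith [sq_nonneg (a ^ (r / 2) - b ^ (r / 2)), hbern, hB2, hB2r]
      have Eminus : 0 ≤ 1/2 * (a ^ (r / 2))^2 + (r - 3/2) * (b ^ (r / 2))^2
          - a ^ (r / 2) * b ^ (r / 2) + r * (a * b ^ (r - 1)) := by
        nlinarith [sq_nonneg (a ^ (r / 2) - b ^ (r / 2)), habr, sq_nonneg (b ^ (r / 2)), hr]
      rcases le_or_gt 0 (a ^ ((r - 2) / 2) * b ^ ((r - 2) / 2) - r * b ^ (r - 2))
        with hQ | hQ
      · have hstep : (a ^ ((r - 2) / 2) * b ^ ((r - 2) / 2) - r * b ^ (r - 2)) * (-(a * b))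
            ≤ (a ^ ((r - 2) / 2) * b ^ ((r - 2) / 2) - r * b ^ (r - 2)) * t :=
          mul_le_mul_of_nonneg_left (by linarith) hQ
        linarith [hstep, Eminus, hA2, hB2, haa, hbb, hcrossab, hb2ab, hB2r, hbbr, hb2abr]
      · have hstep : (a ^ ((r - 2) / 2) * b ^ ((r - 2) / 2) - r * b ^ (r - 2)) * (a * b)
            ≤ (a ^ ((r - 2) / 2) * b ^ ((r - 2) / 2) - r * b ^ (r - 2)) * t :=
          mul_le_mul_of_nonpos_left (by linarith) hQ.le
        linarith [hstep, Eplus, hA2, hB2, haa, hbb, hcrossab, hb2ab, hB2r, hbbr, hb2abr]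

theorem stmt_8 (n : ℕ) (r : ℝ) (hr : 2 ≤ r) :
    ∃ c > 0, ∀ z₁ z₂ : EuclideanSpace ℝ (Fin n),
      c * ‖(‖z₁‖ ^ ((r - 2) / 2)) • z₁ - (‖z₂‖ ^ ((r - 2) / 2)) • z₂‖ ^ 2 ≤
        ‖z₁‖ ^ r - ‖z₂‖ ^ r - ⟪(r * ‖z₂‖ ^ (r - 2)) • z₂, z₁ - z₂⟫ := by
  refine ⟨1/2, by norm_num, fun z₁ z₂ => ?_⟩
  have ha : (0:ℝ) ≤ ‖z₁‖ := norm_nonneg _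
  have hb : (0:ℝ) ≤ ‖z₂‖ := norm_nonneg _
  have ht : |(⟪z₂, z₁⟫ : ℝ)| ≤ ‖z₁‖ * ‖z₂‖ := by
    rw [mul_comm]; exact abs_real_inner_le_norm z₂ z₁
  have hn : ‖(‖z₁‖ ^ ((r - 2) / 2)) • z₁ - (‖z₂‖ ^ ((r - 2) / 2)) • z₂‖ ^ 2 =
      ‖z₁‖ ^ (r - 2) * ‖z₁‖ ^ 2 + ‖z₂‖ ^ (r - 2) * ‖z₂‖ ^ 2
        - 2 * (‖z₁‖ ^ ((r - 2) / 2) * ‖z₂‖ ^ ((r - 2) / 2)) * ⟪z₂, z₁⟫ := by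
    rw [norm_sub_sq_real, norm_smul, norm_smul, real_inner_smul_left,
      real_inner_smul_right, Real.norm_eq_abs, Real.norm_eq_abs,
      abs_of_nonneg (Real.rpow_nonneg ha _), abs_of_nonneg (Real.rpow_nonneg hb _),
      mul_pow, mul_pow, hsq_aux ha, hsq_aux hb, real_inner_comm z₁ z₂]
    ring
  have hi : (⟪(r * ‖z₂‖ ^ (r - 2)) • z₂, z₁ - z₂⟫ : ℝ) =
      r * ‖z₂‖ ^ (r - 2) * (⟪z₂, z₁⟫ - ‖z₂‖ ^ 2) := by
    rw [real_inner_smul_left, inner_sub_right, real_inner_self_eq_norm_sq]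
  rw [hn, hi]
  exact scalar_key hr ha hb ht
end

section
/- Let σ ∈ (0,1), α ∈ (0,1), and let p̃₁ > κ₁ > 1 be real numbers. Define σ̃ := (σ + 2p̃₁ - √((σ + 2p̃₁)² - 4κ₁ασ))/(4κ₁) and σ_α := ασ/(2(σ + 2p̃₁)). Then σ_α < σ̃ < ασ/(2p̃₁). -/
theorem stmt_12 (σ α p₁ κ₁ : ℝ) (hσ : σ ∈ Set.Ioo (0 : ℝ) 1) (hα : α ∈ Set.Ioo (0 : ℝ) 1)
    (hκ : 1 < κ₁) (hp : κ₁ < p₁) :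
    α * σ / (2 * (σ + 2 * p₁)) <
      (σ + 2 * p₁ - Real.sqrt ((σ + 2 * p₁) ^ 2 - 4 * κ₁ * α * σ)) / (4 * κ₁) ∧
    (σ + 2 * p₁ - Real.sqrt ((σ + 2 * p₁) ^ 2 - 4 * κ₁ * α * σ)) / (4 * κ₁) <
      α * σ / (2 * p₁) := by
  obtain ⟨hσ0, hσ1⟩ := hσ
  obtain ⟨hα0, hα1⟩ := hα
  have hp0 : (0:ℝ) < p₁ := by linarith
  have hκ0 : (0:ℝ) < κ₁ := by linarith
  have hS : (0:ℝ) < σ + 2 * p₁ := by linarith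
  have hκα : κ₁ * α < p₁ := by nlinarith
  have hD0 : (0:ℝ) ≤ (σ + 2 * p₁) ^ 2 - 4 * κ₁ * α * σ := by
    nlinarith [mul_lt_mul_of_pos_right hκα hσ0, sq_nonneg σ, sq_nonneg p₁]
  set t := Real.sqrt ((σ + 2 * p₁) ^ 2 - 4 * κ₁ * α * σ) with ht
  have hsq : t ^ 2 = (σ + 2 * p₁) ^ 2 - 4 * κ₁ * α * σ := Real.sq_sqrt hD0
  have htnn : 0 ≤ t := Real.sqrt_nonneg _
  have hlt : t < σ + 2 * p₁ := by nlinarith [mul_pos (mul_pos hκ0 hα0) hσ0, mul_self_nonneg (t - (σ + 2 * p₁))]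
  constructor
  · rw [div_lt_div_iff₀ (by linarith) (by linarith)]
    nlinarith
  · rw [div_lt_div_iff₀ (by linarith) (by linarith)]
    nlinarith
end
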